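/- arXiv:1402.1694 — 2 statements merged into one kernel-verified Lean document; each statement's English description precedes it below -/
import Mathlib

section
/- Let p(θ) = Σ_{i=1}^k α_i φ_{μ_i,Σ_i}(θ) be a mixture of Gaussian densities on ℝ^d with weights α_i > 0 summing to 1, arbitrary means μ_i ∈ ℝ^d, and positive definite covariance matrices Σ_i satisfying vᵀΣ₁v > vᵀΣ_i v for all nonzero v ∈ ℝ^d and all i ≠ 1. Then the dominant component determines the tail of the mixture: lim_{r→∞} sup_{‖θ‖≥r} | log p(θ) − log φ_{μ₁,Σ₁}(θ) − log α₁ | = 0; equivalently, p(θ)/(α₁ φ_{μ₁,Σ₁}(θ)) → 1 as ‖θ‖ → ∞. -/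
open MeasureTheory Matrix Filter

/-- The Euclidean norm on `Fin d → ℝ`. -/
noncomputable def enorm2 {d : ℕ} (x : Fin d → ℝ) : ℝ := Real.sqrt (∑ i, (x i) ^ 2)

/-- The `d`-dimensional Gaussian density with mean `m` and covariance matrix `S`. -/
noncomputable def gaussDensity2 {d : ℕ} (m : Fin d → ℝ) (S : Matrix (Fin d) (Fin d) ℝ)
    (θ : Fin d → ℝ) : ℝ :=
  (2 * Real.pi) ^ (-(d : ℝ) / 2) * S.det ^ (-(1 : ℝ) / 2) *
    Real.exp (-(1 / 2) * ((θ - m) ⬝ᵥ (S⁻¹.mulVec (θ - m))))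

namespace GMAux
open Matrix Real
variable {d : ℕ}

noncomputable def E {d : ℕ} (x : Fin d → ℝ) : EuclideanSpace ℝ (Fin d) :=
  (WithLp.equiv 2 (Fin d → ℝ)).symm x

lemma enorm2_eq (x : Fin d → ℝ) : enorm2 x = ‖E x‖ := by
  rw [EuclideanSpace.norm_eq, enorm2]; simp [E, sq_abs]

lemma enorm2_nonneg (x : Fin d → ℝ) : 0 ≤ enorm2 x := Real.sqrt_nonneg _

lemma abs_dot_le (x y : Fin d → ℝ) : |x ⬝ᵥ y| ≤ enorm2 x * enorm2 y := by
  rw [enorm2_eq, enorm2_eq]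
  have : x ⬝ᵥ y = @inner ℝ _ _ (E x) (E y) := by
    simp [PiLp.inner_apply, dotProduct, E, mul_comm]
  rw [this]
  exact abs_real_inner_le_norm _ _

lemma enorm2_sub_le (x y : Fin d → ℝ) : enorm2 (x - y) ≤ enorm2 x + enorm2 y := by
  rw [enorm2_eq, enorm2_eq, enorm2_eq]
  exact norm_sub_le (E x) (E y)

lemma enorm2_sub_ge (x y : Fin d → ℝ) : enorm2 x - enorm2 y ≤ enorm2 (x - y) := by
  rw [enorm2_eq, enorm2_eq, enorm2_eq]
  exact norm_sub_norm_le (E x) (E y)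

lemma sym_dot (A : Matrix (Fin d) (Fin d) ℝ) (hA : A.IsHermitian) (x y : Fin d → ℝ) :
    x ⬝ᵥ A *ᵥ y = y ⬝ᵥ A *ᵥ x := by
  rw [dotProduct_mulVec, ← mulVec_transpose, show Aᵀ = A from hA]
  exact dotProduct_comm _ _

lemma expand_quad (A : Matrix (Fin d) (Fin d) ℝ) (hA : A.IsHermitian) (y w : Fin d → ℝ) :
    (y + w) ⬝ᵥ A *ᵥ (y + w) = y ⬝ᵥ A *ᵥ y + 2 * (y ⬝ᵥ A *ᵥ w) + w ⬝ᵥ A *ᵥ w := by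
  rw [mulVec_add]
  simp only [dotProduct_add, add_dotProduct, sym_dot A hA w y]
  ring

lemma cs_ineq (A : Matrix (Fin d) (Fin d) ℝ) (hA : A.PosDef) (x y : Fin d → ℝ) :
    (x ⬝ᵥ y) ^ 2 ≤ (y ⬝ᵥ A *ᵥ y) * (x ⬝ᵥ A⁻¹ *ᵥ x) := by
  have hAinv : ∀ v, A *ᵥ (A⁻¹ *ᵥ v) = v := fun v => by
    rw [mulVec_mulVec, Matrix.mul_nonsing_inv _ hA.det_pos.ne'.isUnit, one_mulVec]
  have key : ∀ t : ℝ, 0 ≤ (y ⬝ᵥ A *ᵥ y) * (t * t) + (2 * (x ⬝ᵥ y)) * t + (x ⬝ᵥ A⁻¹ *ᵥ x) := by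
    intro t
    have h0 : 0 ≤ (A⁻¹ *ᵥ x + t • y) ⬝ᵥ A *ᵥ (A⁻¹ *ᵥ x + t • y) := by
      simpa using hA.posSemidef.dotProduct_mulVec_nonneg (A⁻¹ *ᵥ x + t • y)
    have e1 : (A⁻¹ *ᵥ x) ⬝ᵥ A *ᵥ (A⁻¹ *ᵥ x) = x ⬝ᵥ A⁻¹ *ᵥ x := by
      rw [hAinv x, dotProduct_comm]
    have e2 : (A⁻¹ *ᵥ x) ⬝ᵥ A *ᵥ y = x ⬝ᵥ y := by
      rw [sym_dot A hA.isHermitian, hAinv x, dotProduct_comm]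
    calc (0:ℝ) ≤ (A⁻¹ *ᵥ x + t • y) ⬝ᵥ A *ᵥ (A⁻¹ *ᵥ x + t • y) := h0
    _ = (y ⬝ᵥ A *ᵥ y) * (t * t) + (2 * (x ⬝ᵥ y)) * t + (x ⬝ᵥ A⁻¹ *ᵥ x) := by
        have e3 : y ⬝ᵥ A *ᵥ (A⁻¹ *ᵥ x) = x ⬝ᵥ y := by
          rw [sym_dot A hA.isHermitian]; exact e2
        simp only [mulVec_add, mulVec_smul, dotProduct_add, add_dotProduct,
          dotProduct_smul, smul_dotProduct, smul_eq_mul, e1, e2, e3]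
        ring
  have hd := discrim_le_zero key
  rw [discrim] at hd
  nlinarith [hd]

lemma gap_posdef (A B : Matrix (Fin d) (Fin d) ℝ) (hA : A.PosDef) (hB : B.PosDef)
    (hlt : ∀ v : Fin d → ℝ, v ≠ 0 → v ⬝ᵥ A *ᵥ v < v ⬝ᵥ B *ᵥ v) :
    (A⁻¹ - B⁻¹).PosDef := by
  refine Matrix.PosDef.of_dotProduct_mulVec_pos ?_ ?_
  · exact hA.isHermitian.inv.sub hB.isHermitian.inv
  · intro x hx
    have hBinv : ∀ v, B *ᵥ (B⁻¹ *ᵥ v) = v := fun v => by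
      rw [mulVec_mulVec, Matrix.mul_nonsing_inv _ hB.det_pos.ne'.isUnit, one_mulVec]
    set y := B⁻¹ *ᵥ x with hy
    have hyne : y ≠ 0 := by
      intro h
      apply hx
      have := hBinv x
      rw [← hy, h, mulVec_zero] at this
      exact this.symm
    have hb0 : 0 < x ⬝ᵥ B⁻¹ *ᵥ x := by simpa using hB.inv.dotProduct_mulVec_pos hx
    have hyBy : y ⬝ᵥ B *ᵥ y = x ⬝ᵥ B⁻¹ *ᵥ x := by
      rw [sym_dot B hB.isHermitian, hy, hBinv x]
      exact dotProduct_comm _ _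
    have hlt' : y ⬝ᵥ A *ᵥ y < x ⬝ᵥ B⁻¹ *ᵥ x := by
      rw [← hyBy]; exact hlt y hyne
    have hApos : 0 < y ⬝ᵥ A *ᵥ y := by simpa using hA.dotProduct_mulVec_pos hyne
    have hcs : (x ⬝ᵥ y) ^ 2 ≤ (y ⬝ᵥ A *ᵥ y) * (x ⬝ᵥ A⁻¹ *ᵥ x) := cs_ineq A hA x y
    have hxy : x ⬝ᵥ y = x ⬝ᵥ B⁻¹ *ᵥ x := by rw [hy]
    rw [hxy] at hcs
    have hfin : x ⬝ᵥ B⁻¹ *ᵥ x < x ⬝ᵥ A⁻¹ *ᵥ x := by nlinarith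
    have : x ⬝ᵥ (A⁻¹ - B⁻¹) *ᵥ x = x ⬝ᵥ A⁻¹ *ᵥ x - x ⬝ᵥ B⁻¹ *ᵥ x := by
      rw [Matrix.sub_mulVec, dotProduct_sub]
    simpa [this] using sub_pos.mpr hfin

lemma coercive (hd : 0 < d) (M : Matrix (Fin d) (Fin d) ℝ) (hM : M.PosDef) :
    ∃ c > 0, ∀ x : Fin d → ℝ, c * enorm2 x ^ 2 ≤ x ⬝ᵥ M *ᵥ x := by
  set f : EuclideanSpace ℝ (Fin d) → ℝ :=
    fun x => (WithLp.equiv 2 (Fin d → ℝ) x) ⬝ᵥ M *ᵥ (WithLp.equiv 2 (Fin d → ℝ) x) with hf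
  have hg : Continuous (fun v : Fin d → ℝ => v ⬝ᵥ M *ᵥ v) := by
    simp only [dotProduct, mulVec]
    exact continuous_finset_sum _ fun i _ => (continuous_apply i).mul
      (continuous_finset_sum _ fun j _ => continuous_const.mul (continuous_apply j))
  have hfc : Continuous f := hg.comp (PiLp.continuous_ofLp (p := 2) (β := fun _ : Fin d => ℝ))
  -- a point on the unit sphere
  have hpt : ∃ z : EuclideanSpace ℝ (Fin d), z ∈ Metric.sphere (0 : EuclideanSpace ℝ (Fin d)) 1 := by
    haveI : Nonempty (Fin d) := ⟨⟨0, hd⟩⟩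
    haveI : Nontrivial (EuclideanSpace ℝ (Fin d)) := inferInstance
    obtain ⟨z, hz⟩ := NormedSpace.sphere_nonempty (x := (0 : EuclideanSpace ℝ (Fin d)))
      (r := 1) |>.mpr zero_le_one
    exact ⟨z, hz⟩
  obtain ⟨pt, hptS⟩ := hpt
  obtain ⟨x₀, hx₀S, hmin⟩ := (isCompact_sphere (0 : EuclideanSpace ℝ (Fin d)) 1).exists_isMinOn
    ⟨pt, hptS⟩ hfc.continuousOn
  have hx₀norm : ‖x₀‖ = 1 := by simpa using hx₀S
  have hx₀ne : (WithLp.equiv 2 (Fin d → ℝ)) x₀ ≠ 0 := by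
    intro h
    have : x₀ = 0 := by
      apply (WithLp.equiv 2 (Fin d → ℝ)).injective
      simpa using h
    rw [this] at hx₀norm; simp at hx₀norm
  have hc : 0 < f x₀ := by simpa [hf] using hM.dotProduct_mulVec_pos hx₀ne
  refine ⟨f x₀, hc, fun x => ?_⟩
  by_cases hx : x = 0
  · simp [hx, enorm2]
  · have hxE : E x ≠ 0 := by
      intro h; apply hx
      have := congrArg (WithLp.equiv 2 (Fin d → ℝ)) h
      simpa [E] using this
    have hn : 0 < ‖E x‖ := norm_pos_iff.mpr hxE
    set u : EuclideanSpace ℝ (Fin d) := ‖E x‖⁻¹ • E x with hu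
    have huS : u ∈ Metric.sphere (0 : EuclideanSpace ℝ (Fin d)) 1 := by
      simp [hu, norm_smul, abs_of_pos (inv_pos.mpr hn), inv_mul_cancel₀ hn.ne']
    have hmu := hmin huS
    have hfu : f u = ‖E x‖⁻¹ ^ 2 * (x ⬝ᵥ M *ᵥ x) := by
      have : (WithLp.equiv 2 (Fin d → ℝ)) u = ‖E x‖⁻¹ • x := rfl
      rw [hf]
      simp only [this, smul_dotProduct, mulVec_smul, dotProduct_smul, smul_eq_mul]
      ring
    have : f x₀ ≤ ‖E x‖⁻¹ ^ 2 * (x ⬝ᵥ M *ᵥ x) := by rw [← hfu]; exact hmu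
    rw [enorm2_eq]
    have h2 : f x₀ * ‖E x‖ ^ 2 ≤ x ⬝ᵥ M *ᵥ x := by
      have hpos : (0:ℝ) < ‖E x‖ ^ 2 := by positivity
      calc f x₀ * ‖E x‖ ^ 2 ≤ (‖E x‖⁻¹ ^ 2 * (x ⬝ᵥ M *ᵥ x)) * ‖E x‖ ^ 2 :=
            mul_le_mul_of_nonneg_right this hpos.le
        _ = x ⬝ᵥ M *ᵥ x := by field_simp
    exact h2

lemma gauss_pos (m : Fin d → ℝ) (S : Matrix (Fin d) (Fin d) ℝ) (hS : S.PosDef)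
    (θ : Fin d → ℝ) : 0 < gaussDensity2 m S θ := by
  unfold gaussDensity2
  have h2π : (0:ℝ) < 2 * Real.pi := by positivity
  exact mul_pos (mul_pos (Real.rpow_pos_of_pos h2π _)
    (Real.rpow_pos_of_pos hS.det_pos _)) (Real.exp_pos _)

set_option maxHeartbeats 1000000 in
lemma tail_component (hd : 0 < d) (A B : Matrix (Fin d) (Fin d) ℝ)
    (hA : A.PosDef) (hB : B.PosDef) (hgap : (A⁻¹ - B⁻¹).PosDef)
    (mA mB : Fin d → ℝ) (a b δ : ℝ) (ha : 0 < a) (hb : 0 < b) (hδ : 0 < δ) :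
    ∃ r : ℝ, ∀ θ : Fin d → ℝ, r ≤ enorm2 θ →
      a * gaussDensity2 mA A θ ≤ δ * (b * gaussDensity2 mB B θ) := by
  obtain ⟨c, hc, hcoer⟩ := coercive hd _ hgap
  set dA := A.det ^ (-(1:ℝ)/2) with hdA
  set dB := B.det ^ (-(1:ℝ)/2) with hdB
  have hdApos : 0 < dA := Real.rpow_pos_of_pos hA.det_pos _
  have hdBpos : 0 < dB := Real.rpow_pos_of_pos hB.det_pos _
  set K := δ * b * dB / (a * dA) with hK
  have hKpos : 0 < K := by positivity
  set w := mB - mA with hw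
  set L := enorm2 (B⁻¹ *ᵥ w) with hL
  have hL0 : 0 ≤ L := enorm2_nonneg _
  set m1 := enorm2 mA with hm1
  set m0 := enorm2 mB with hm0
  have hm10 : 0 ≤ m1 := enorm2_nonneg _
  have hm00 : 0 ≤ m0 := enorm2_nonneg _
  set C2 := L * m0 + (L + 1) * m1 with hC2
  refine ⟨max (m1 + 2*(L+1)/c) (C2 - Real.log K), fun θ hθ => ?_⟩
  set s := enorm2 θ with hs
  have hs1 : m1 + 2*(L+1)/c ≤ s := le_trans (le_max_left _ _) hθ
  have hs2 : C2 - Real.log K ≤ s := le_trans (le_max_right _ _) hθ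
  set QA := (θ - mA) ⬝ᵥ A⁻¹ *ᵥ (θ - mA) with hQA
  set QB := (θ - mB) ⬝ᵥ B⁻¹ *ᵥ (θ - mB) with hQB
  -- the key exponent bound
  have hsplit : θ - mA = (θ - mB) + w := by rw [hw]; abel
  have hexpand : (θ - mA) ⬝ᵥ B⁻¹ *ᵥ (θ - mA)
      = QB + 2 * ((θ - mB) ⬝ᵥ B⁻¹ *ᵥ w) + w ⬝ᵥ B⁻¹ *ᵥ w := by
    rw [hsplit]; exact expand_quad _ hB.isHermitian.inv _ _
  have hco := hcoer (θ - mA)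
  have hcosub : (θ - mA) ⬝ᵥ (A⁻¹ - B⁻¹) *ᵥ (θ - mA)
      = QA - (θ - mA) ⬝ᵥ B⁻¹ *ᵥ (θ - mA) := by
    rw [Matrix.sub_mulVec, dotProduct_sub]
  have hQw : 0 ≤ w ⬝ᵥ B⁻¹ *ᵥ w := by simpa using hB.inv.posSemidef.dotProduct_mulVec_nonneg w
  have hcross : -((θ - mB) ⬝ᵥ B⁻¹ *ᵥ w) ≤ (s + m0) * L := by
    have h1 := abs_dot_le (θ - mB) (B⁻¹ *ᵥ w)
    have h2 := enorm2_sub_le θ mB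
    have h3 := neg_abs_le ((θ - mB) ⬝ᵥ B⁻¹ *ᵥ w)
    have h4 : enorm2 (θ - mB) * L ≤ (s + m0) * L :=
      mul_le_mul_of_nonneg_right (by rw [hs, hm0] at *; linarith) hL0
    nlinarith [abs_nonneg ((θ - mB) ⬝ᵥ B⁻¹ *ᵥ w)]
  have hnormA : (s - m1)^2 ≤ enorm2 (θ - mA) ^ 2 := by
    have h1 := enorm2_sub_ge θ mA
    have h2 : 0 ≤ s - m1 := by
      have : 0 < 2*(L+1)/c := by positivity
      linarith
    have := enorm2_nonneg (θ - mA)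
    nlinarith
  have hQAbound : QB + 2 * ((θ - mB) ⬝ᵥ B⁻¹ *ᵥ w) + c * (s - m1)^2 ≤ QA := by
    have := hcoer (θ - mA)
    rw [hcosub] at this
    have hmono : c * (s - m1)^2 ≤ c * enorm2 (θ - mA)^2 :=
      mul_le_mul_of_nonneg_left hnormA hc.le
    rw [hexpand] at this
    linarith
  -- quadratic dominates linear
  have hquad : (L+1) * (s - m1) ≤ (c/2) * (s - m1)^2 := by
    have h2 : 2*(L+1)/c ≤ s - m1 := by linarith
    have h3 : 0 ≤ s - m1 := le_trans (by positivity) h2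
    have h2' : 2*(L+1) ≤ (s - m1) * c := (div_le_iff₀ hc).mp h2
    have h4 : L + 1 ≤ (c/2) * (s - m1) := by linarith
    have h5 := mul_le_mul_of_nonneg_right h4 h3
    nlinarith [h5]
  have hG : -(1/2) * QA ≤ Real.log K + -(1/2) * QB := by
    have : (c/2) * (s - m1)^2 ≤ (s + m0) * L + (1/2) * (QA - QB) := by nlinarith
    nlinarith [hs2, hC2 ▸ hs2]
  -- conclude
  have hexp : Real.exp (-(1/2) * QA) ≤ K * Real.exp (-(1/2) * QB) := by
    calc Real.exp (-(1/2) * QA) ≤ Real.exp (Real.log K + -(1/2) * QB) :=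
          Real.exp_le_exp.mpr hG
      _ = K * Real.exp (-(1/2) * QB) := by rw [Real.exp_add, Real.exp_log hKpos]
  have hKdef : a * dA * K = δ * b * dB := by
    rw [hK]; field_simp
  unfold gaussDensity2
  set P := (2 * Real.pi) ^ (-(d:ℝ)/2) with hP
  have hPpos : (0:ℝ) < P := Real.rpow_pos_of_pos (by positivity) _
  calc a * (P * dA * Real.exp (-(1/2) * QA))
      ≤ a * (P * dA * (K * Real.exp (-(1/2) * QB))) := by
        apply mul_le_mul_of_nonneg_left _ ha.le
        apply mul_le_mul_of_nonneg_left hexp (by positivity)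
    _ = (a * dA * K) * (P * Real.exp (-(1/2) * QB)) := by ring
    _ = δ * (b * (P * dB * Real.exp (-(1/2) * QB))) := by rw [hKdef]; ring
end GMAux

/-- In a Gaussian mixture whose first component has strictly dominant
covariance, the dominant component determines the tail of the mixture:
`sup_{‖θ‖ ≥ r} |log p(θ) - log φ_{μ₁,Σ₁}(θ) - log α₁| → 0` as `r → ∞`. -/
theorem gaussian_mixture_dominant_tail {d k : ℕ}
    (α : Fin (k + 1) → ℝ) (hα_pos : ∀ i, 0 < α i) (hα_sum : ∑ i, α i = 1)
    (μs : Fin (k + 1) → (Fin d → ℝ))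
    (Sig : Fin (k + 1) → Matrix (Fin d) (Fin d) ℝ) (hSig_pos : ∀ i, (Sig i).PosDef)
    (hdom : ∀ v : Fin d → ℝ, v ≠ 0 → ∀ i, i ≠ 0 →
      v ⬝ᵥ ((Sig i).mulVec v) < v ⬝ᵥ ((Sig 0).mulVec v))
    (p : (Fin d → ℝ) → ℝ) (hp : ∀ θ, p θ = ∑ i, α i * gaussDensity2 (μs i) (Sig i) θ) :
    Filter.Tendsto
      (fun r : ℝ => ⨆ θ : {θ : Fin d → ℝ // r ≤ enorm2 θ},
        |Real.log (p θ) - Real.log (gaussDensity2 (μs 0) (Sig 0) θ) - Real.log (α 0)|)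
      Filter.atTop (nhds 0) := by
  rcases Nat.eq_zero_or_pos d with hd0 | hd
  · -- degenerate dimension: the index set is eventually empty
    subst hd0
    have hev : (fun _ : ℝ => (0:ℝ)) =ᶠ[atTop]
        (fun r : ℝ => ⨆ θ : {θ : Fin 0 → ℝ // r ≤ enorm2 θ},
          |Real.log (p θ) - Real.log (gaussDensity2 (μs 0) (Sig 0) θ) - Real.log (α 0)|) := by
      filter_upwards [eventually_ge_atTop (1:ℝ)] with r hr
      haveI : IsEmpty {θ : Fin 0 → ℝ // r ≤ enorm2 θ} := by
        constructor
        rintro ⟨θ, hθ⟩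
        have : enorm2 θ = 0 := by simp [enorm2]
        rw [this] at hθ; linarith
      rw [iSup_of_empty', Real.sSup_empty]
    exact Filter.Tendsto.congr' hev tendsto_const_nhds
  · rw [Metric.tendsto_atTop]
    intro ε hε
    have hε' : 0 < ε / 2 := by linarith
    have hδ : 0 < (ε/2) / (k+1) := by positivity
    have hcomp : ∀ i : Fin k, ∃ r : ℝ, ∀ θ : Fin d → ℝ, r ≤ enorm2 θ →
        α i.succ * gaussDensity2 (μs i.succ) (Sig i.succ) θ ≤
          ((ε/2)/(k+1)) * (α 0 * gaussDensity2 (μs 0) (Sig 0) θ) := by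
      intro i
      exact GMAux.tail_component hd _ _ (hSig_pos i.succ) (hSig_pos 0)
        (GMAux.gap_posdef _ _ (hSig_pos i.succ) (hSig_pos 0)
          (fun v hv => hdom v hv i.succ (Fin.succ_ne_zero i)))
        (μs i.succ) (μs 0) _ _ _ (hα_pos i.succ) (hα_pos 0) hδ
    choose rf hrf using hcomp
    refine ⟨1 + ∑ i, |rf i|, fun r hr => ?_⟩
    -- the pointwise estimate
    have hpt : ∀ θ : Fin d → ℝ, r ≤ enorm2 θ →
        |Real.log (p θ) - Real.log (gaussDensity2 (μs 0) (Sig 0) θ) - Real.log (α 0)| ≤ ε/2 := by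
      intro θ hθ
      have hrθ : ∀ i : Fin k, rf i ≤ enorm2 θ := by
        intro i
        have h1 : rf i ≤ |rf i| := le_abs_self _
        have h2 : |rf i| ≤ ∑ j, |rf j| :=
          Finset.single_le_sum (f := fun j => |rf j|) (fun j _ => abs_nonneg _)
            (Finset.mem_univ i)
        linarith
      set g0 := gaussDensity2 (μs 0) (Sig 0) θ with hg0
      have hg0pos : 0 < g0 := GMAux.gauss_pos _ _ (hSig_pos 0) θ
      set q := α 0 * g0 with hq
      have hqpos : 0 < q := mul_pos (hα_pos 0) hg0pos
      have hsum : p θ = q + ∑ i : Fin k,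
          α i.succ * gaussDensity2 (μs i.succ) (Sig i.succ) θ := by
        rw [hp θ, Fin.sum_univ_succ]
      have htermpos : ∀ i : Fin k,
          0 ≤ α i.succ * gaussDensity2 (μs i.succ) (Sig i.succ) θ :=
        fun i => le_of_lt (mul_pos (hα_pos i.succ) (GMAux.gauss_pos _ _ (hSig_pos i.succ) θ))
      have hlow : q ≤ p θ := by
        rw [hsum]
        have : 0 ≤ ∑ i : Fin k, α i.succ * gaussDensity2 (μs i.succ) (Sig i.succ) θ :=
          Finset.sum_nonneg fun i _ => htermpos i
        linarith
      have hppos : 0 < p θ := lt_of_lt_of_le hqpos hlow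
      have hup : p θ ≤ q * (1 + ε/2) := by
        rw [hsum]
        have h1 : ∑ i : Fin k, α i.succ * gaussDensity2 (μs i.succ) (Sig i.succ) θ ≤
            ∑ _i : Fin k, ((ε/2)/(k+1)) * q :=
          Finset.sum_le_sum fun i _ => hrf i θ (hrθ i)
        have h2 : ∑ _i : Fin k, ((ε/2)/(k+1)) * q = (k:ℝ) * (((ε/2)/(k+1)) * q) := by
          rw [Finset.sum_const, Finset.card_univ, Fintype.card_fin, nsmul_eq_mul]
        have h3 : (k:ℝ) * (((ε/2)/(k+1)) * q) ≤ (ε/2) * q := by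
          have hk1 : (0:ℝ) < (k:ℝ) + 1 := by positivity
          rw [div_mul_eq_mul_div, mul_div_assoc', div_le_iff₀ hk1]
          nlinarith [hqpos.le, hε'.le]
        linarith
      have hlog1 : Real.log q ≤ Real.log (p θ) := Real.log_le_log hqpos hlow
      have hlog2 : Real.log (p θ) ≤ Real.log q + ε/2 := by
        have h4 : Real.log (p θ) ≤ Real.log (q * (1 + ε/2)) := Real.log_le_log hppos hup
        have h5 : Real.log (q * (1 + ε/2)) = Real.log q + Real.log (1 + ε/2) :=
          Real.log_mul hqpos.ne' (by linarith)
        have h6 : Real.log (1 + ε/2) ≤ ε/2 := by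
          have := Real.log_le_sub_one_of_pos (show (0:ℝ) < 1 + ε/2 by linarith)
          linarith
        linarith
      have hlogq : Real.log q = Real.log (α 0) + Real.log g0 :=
        Real.log_mul (hα_pos 0).ne' hg0pos.ne'
      rw [abs_le]
      constructor <;> [skip; skip] <;>
        (rw [show Real.log (p θ) - Real.log g0 - Real.log (α 0)
            = Real.log (p θ) - Real.log q by rw [hlogq]; ring]; linarith)
    -- from pointwise estimate to the supremum
    have hne : Nonempty {θ : Fin d → ℝ // r ≤ enorm2 θ} := by
      refine ⟨⟨fun _ => max r 0, ?_⟩⟩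
      have hsumconst : ∑ _i : Fin d, (max r 0)^2 = (d:ℝ) * (max r 0)^2 := by
        rw [Finset.sum_const, Finset.card_univ, Fintype.card_fin, nsmul_eq_mul]
      have h1 : ((max r 0)^2 : ℝ) ≤ (d:ℝ) * (max r 0)^2 := by
        have : (1:ℝ) ≤ (d:ℝ) := by exact_mod_cast hd
        nlinarith [sq_nonneg (max r 0)]
      calc r ≤ max r 0 := le_max_left _ _
        _ = Real.sqrt ((max r 0)^2) := (Real.sqrt_sq (le_max_right r 0)).symm
        _ ≤ enorm2 (fun _ : Fin d => max r 0) := by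
            rw [enorm2, hsumconst]
            exact Real.sqrt_le_sqrt h1
    have hbdd : BddAbove (Set.range fun θ : {θ : Fin d → ℝ // r ≤ enorm2 θ} =>
        |Real.log (p θ) - Real.log (gaussDensity2 (μs 0) (Sig 0) θ) - Real.log (α 0)|) := by
      refine ⟨ε/2, ?_⟩
      rintro y ⟨θ, rfl⟩
      exact hpt θ θ.2
    have hub : (⨆ θ : {θ : Fin d → ℝ // r ≤ enorm2 θ},
        |Real.log (p θ) - Real.log (gaussDensity2 (μs 0) (Sig 0) θ) - Real.log (α 0)|) ≤ ε/2 :=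
      ciSup_le fun θ => hpt θ θ.2
    have hlb : 0 ≤ ⨆ θ : {θ : Fin d → ℝ // r ≤ enorm2 θ},
        |Real.log (p θ) - Real.log (gaussDensity2 (μs 0) (Sig 0) θ) - Real.log (α 0)| :=
      le_trans (abs_nonneg _) (le_ciSup hbdd hne.some)
    rw [Real.dist_eq, sub_zero, abs_of_nonneg hlb]
    linarith
end

section
/- On ℝ^d, let p_∞(θ) = exp(−θᵀAθ) with A symmetric positive definite, and suppose ℓ : ℝ^d → [0,∞) is a probability density such that there exist constants C, ε₀ > 0 and x₀ ≥ 0 with ℓ(x) ≤ C·p_∞(x)^{1/(1+ε₀)} for all ‖x‖ ≥ x₀. Then for every fixed 0 < 𝒴 < ∞, sup_{x∈ℝ^d} p_∞(x)^{−1/(2(1+ε₀))} · ∫_{[−𝒴,𝒴]^d} ℓ(y − x) dy < ∞; that is, the function x ↦ V_ε(x)·L(x, [−𝒴,𝒴]^d) is uniformly bounded, where V_ε(x) = p_∞(x)^{−1/(2(1+ε₀))} and L(x,·) is the translation-invariant kernel with density y ↦ ℓ(y−x). -/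
open MeasureTheory Matrix

/-- The Euclidean norm on `Fin d → ℝ`. -/
noncomputable def enorm5 {d : ℕ} (x : Fin d → ℝ) : ℝ := Real.sqrt (∑ i, (x i) ^ 2)

section aux

variable {d : ℕ}

lemma enorm5_eq_norm (x : Fin d → ℝ) :
    enorm5 x = ‖(WithLp.equiv 2 (Fin d → ℝ)).symm x‖ := by
  simp [enorm5, EuclideanSpace.norm_eq, Real.norm_eq_abs, sq_abs]

lemma enorm5_nonneg (x : Fin d → ℝ) : 0 ≤ enorm5 x := Real.sqrt_nonneg _

lemma enorm5_sq (x : Fin d → ℝ) : enorm5 x ^ 2 = ∑ i, x i ^ 2 :=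
  Real.sq_sqrt (Finset.sum_nonneg fun _ _ => sq_nonneg _)

lemma enorm5_add_le (x y : Fin d → ℝ) : enorm5 (x + y) ≤ enorm5 x + enorm5 y := by
  simp only [enorm5_eq_norm]
  have h : (WithLp.equiv 2 (Fin d → ℝ)).symm (x + y)
      = (WithLp.equiv 2 (Fin d → ℝ)).symm x + (WithLp.equiv 2 (Fin d → ℝ)).symm y := rfl
  rw [h]
  exact norm_add_le _ _

lemma enorm5_neg (x : Fin d → ℝ) : enorm5 (-x) = enorm5 x := by
  simp [enorm5]

lemma enorm5_smul (c : ℝ) (x : Fin d → ℝ) : enorm5 (c • x) = |c| * enorm5 x := by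
  simp only [enorm5, Pi.smul_apply, smul_eq_mul, mul_pow, ← Finset.mul_sum]
  rw [Real.sqrt_mul (sq_nonneg c), Real.sqrt_sq_eq_abs]

lemma abs_apply_le_enorm5 (x : Fin d → ℝ) (i : Fin d) : |x i| ≤ enorm5 x := by
  have h : x i ^ 2 ≤ ∑ j, x j ^ 2 :=
    Finset.single_le_sum (f := fun j => x j ^ 2) (fun _ _ => sq_nonneg _) (Finset.mem_univ i)
  calc |x i| = Real.sqrt (x i ^ 2) := (Real.sqrt_sq_eq_abs _).symm
    _ ≤ enorm5 x := Real.sqrt_le_sqrt h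

lemma enorm5_pos {x : Fin d → ℝ} (hx : x ≠ 0) : 0 < enorm5 x := by
  rw [enorm5_eq_norm]
  rw [norm_pos_iff]
  intro h; apply hx; have := congrArg (WithLp.equiv 2 (Fin d → ℝ)) h; simpa using this

/-- absolute bound on the bilinear form -/
lemma dot_bound5 (A : Matrix (Fin d) (Fin d) ℝ) (v w : Fin d → ℝ) :
    |v ⬝ᵥ A.mulVec w| ≤ (∑ i, ∑ j, |A i j|) * (enorm5 v * enorm5 w) := by
  have h0 : v ⬝ᵥ A.mulVec w = ∑ i, ∑ j, v i * (A i j * w j) := by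
    simp [dotProduct, Matrix.mulVec, Finset.mul_sum]
  rw [h0]
  calc |∑ i, ∑ j, v i * (A i j * w j)| ≤ ∑ i, |∑ j, v i * (A i j * w j)| :=
        Finset.abs_sum_le_sum_abs _ _
    _ ≤ ∑ i, ∑ j, |v i * (A i j * w j)| :=
        Finset.sum_le_sum fun i _ => Finset.abs_sum_le_sum_abs _ _
    _ ≤ ∑ i, ∑ j, |A i j| * (enorm5 v * enorm5 w) := by
        refine Finset.sum_le_sum fun i _ => Finset.sum_le_sum fun j _ => ?_
        have h1 : |v i * (A i j * w j)| = |A i j| * (|v i| * |w j|) := by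
          rw [abs_mul, abs_mul]; ring
        rw [h1]
        have hmul : |v i| * |w j| ≤ enorm5 v * enorm5 w :=
          mul_le_mul (abs_apply_le_enorm5 v i) (abs_apply_le_enorm5 w j)
            (abs_nonneg _) (enorm5_nonneg _)
        exact mul_le_mul_of_nonneg_left hmul (abs_nonneg _)
    _ = (∑ i, ∑ j, |A i j|) * (enorm5 v * enorm5 w) := by
        simp [Finset.sum_mul]

/-- coercivity of a positive definite quadratic form -/
lemma coercive5 (A : Matrix (Fin d) (Fin d) ℝ) (hA : A.PosDef) :
    ∃ lam : ℝ, 0 < lam ∧ ∀ x : Fin d → ℝ, lam * enorm5 x ^ 2 ≤ x ⬝ᵥ A.mulVec x := by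
  rcases Nat.eq_zero_or_pos d with hd | hd
  · refine ⟨1, one_pos, fun x => ?_⟩
    subst hd
    simp [enorm5, dotProduct]
  · set q : (Fin d → ℝ) → ℝ := fun x => x ⬝ᵥ A.mulVec x with hq
    have hq_eq : q = fun x => ∑ i, x i * ∑ j, A i j * x j := by
      funext x; simp [hq, dotProduct, Matrix.mulVec]
    have hq_cont : Continuous q := by
      rw [hq_eq]
      exact continuous_finset_sum _ fun i _ =>
        (continuous_apply i).mul
          (continuous_finset_sum _ fun j _ => continuous_const.mul (continuous_apply j))
    set S : Set (Fin d → ℝ) := {x | ∑ i, x i ^ 2 = 1} with hS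
    have hS_closed : IsClosed S :=
      isClosed_eq (continuous_finset_sum _ fun i _ => (continuous_apply i).pow 2)
        continuous_const
    have hS_sub : S ⊆ Metric.closedBall 0 1 := by
      intro x hx
      rw [Metric.mem_closedBall, dist_zero_right]
      rw [pi_norm_le_iff_of_nonneg zero_le_one]
      intro i
      have h2 : x i ^ 2 ≤ 1 := by
        have := Finset.single_le_sum (f := fun j => x j ^ 2) (fun _ _ => sq_nonneg _)
          (Finset.mem_univ i)
        rw [hx] at this
        exact this
      rw [Real.norm_eq_abs]
      nlinarith [abs_nonneg (x i), sq_abs (x i)]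
    have hS_compact : IsCompact S :=
      (isCompact_closedBall (0 : Fin d → ℝ) 1).of_isClosed_subset hS_closed hS_sub
    have hS_ne : S.Nonempty := by
      refine ⟨(Pi.single (⟨0, hd⟩ : Fin d) 1 : Fin d → ℝ), ?_⟩
      show ∑ i, (Pi.single (⟨0, hd⟩ : Fin d) 1 : Fin d → ℝ) i ^ 2 = 1
      rw [Finset.sum_eq_single (⟨0, hd⟩ : Fin d)]
      · simp
      · intro b _ hb
        simp [Pi.single_apply, hb]
      · intro h
        exact absurd (Finset.mem_univ _) h
    obtain ⟨z, hzS, hzmin⟩ := hS_compact.exists_isMinOn hS_ne hq_cont.continuousOn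
    have hz_ne : z ≠ 0 := by
      intro h
      rw [h] at hzS
      simp [hS] at hzS
    have hlam : 0 < q z := by simpa [hq] using hA.dotProduct_mulVec_pos hz_ne
    refine ⟨q z, hlam, fun x => ?_⟩
    by_cases hx : x = 0
    · subst hx
      simp [enorm5, hq]
    · have hn : 0 < enorm5 x := enorm5_pos hx
      set n := enorm5 x with hndef
      set u : Fin d → ℝ := n⁻¹ • x with hu
      have huS : u ∈ S := by
        have h1 : enorm5 u = 1 := by
          rw [hu, enorm5_smul, abs_of_pos (inv_pos.mpr hn), ← hndef]
          field_simp
        simp only [hS, Set.mem_setOf_eq]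
        rw [← enorm5_sq, h1]
        norm_num
      have hqu : q u = n⁻¹ * (n⁻¹ * q x) := by
        simp [hq, hu, Matrix.mulVec_smul, smul_dotProduct, dotProduct_smul,
          smul_eq_mul]
      have h2 : q z ≤ q u := hzmin huS
      rw [hqu] at h2
      have h3 : q z * n ^ 2 ≤ (n⁻¹ * (n⁻¹ * q x)) * n ^ 2 :=
        mul_le_mul_of_nonneg_right h2 (sq_nonneg n)
      have h4 : (n⁻¹ * (n⁻¹ * q x)) * n ^ 2 = q x := by
        have hn' : n ≠ 0 := ne_of_gt hn
        rw [pow_two]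
        field_simp
      rw [h4] at h3
      exact h3

lemma quad_bound5 (lam Kc n qv : ℝ) (hlam : 0 < lam) (hn : 0 ≤ n)
    (h : lam * n ^ 2 ≤ qv) : -qv / 2 + Kc * n ≤ Kc ^ 2 / (2 * lam) := by
  rw [le_div_iff₀ (by positivity : (0:ℝ) < 2 * lam)]
  nlinarith [sq_nonneg (Kc - lam * n), mul_le_mul_of_nonneg_left h hlam.le]

end aux

/-- If a probability density `ℓ` on `ℝ^d` is dominated at infinity by
`p_∞^{1/(1+ε₀)}` where `p_∞(θ) = exp(-θᵀAθ)` with `A` symmetric positive definite, then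
`x ↦ V_ε(x) · L(x, [-𝒴, 𝒴]^d)` is uniformly bounded, where `V_ε(x) = p_∞(x)^{-1/(2(1+ε₀))}`
and `L` is the translation-invariant kernel with density `y ↦ ℓ(y - x)`. -/
theorem uniform_bound_Veps_times_proposal_mass {d : ℕ}
    (A : Matrix (Fin d) (Fin d) ℝ) (hA_symm : A.IsSymm) (hA_pos : A.PosDef)
    (pinf : (Fin d → ℝ) → ℝ)
    (hpinf : ∀ θ, pinf θ = Real.exp (-(θ ⬝ᵥ (A.mulVec θ))))
    (ℓ : (Fin d → ℝ) → ℝ) (hℓ_nonneg : ∀ x, 0 ≤ ℓ x) (hℓ_meas : Measurable ℓ)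
    (hℓ_prob : ∫ x, ℓ x = 1)
    (C ε₀ x₀ : ℝ) (hC : 0 < C) (hε₀ : 0 < ε₀) (hx₀ : 0 ≤ x₀)
    (hdom : ∀ x, x₀ ≤ enorm5 x → ℓ x ≤ C * (pinf x) ^ ((1 : ℝ) / (1 + ε₀)))
    (𝒴 : ℝ) (h𝒴 : 0 < 𝒴) :
    ∃ M : ℝ, ∀ x : Fin d → ℝ,
      (pinf x) ^ (-(1 / (2 * (1 + ε₀)))) *
        ∫ y in (Set.univ.pi fun _ : Fin d => Set.Icc (-𝒴) 𝒴), ℓ (y - x) ≤ M := by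
  set ε : ℝ := 1 + ε₀ with hεdef
  have hε : 0 < ε := by simp only [hεdef]; linarith
  set K : Set (Fin d → ℝ) := Set.univ.pi fun _ : Fin d => Set.Icc (-𝒴) 𝒴 with hKdef
  have hKc : IsCompact K := isCompact_univ_pi fun _ => isCompact_Icc
  have hKm : MeasurableSet K := MeasurableSet.univ_pi fun _ => measurableSet_Icc
  have hKfin : volume K < ⊤ := hKc.measure_lt_top
  obtain ⟨lam, hlam, hcoer⟩ := coercive5 A hA_pos
  have hℓ_int : Integrable ℓ := by
    by_contra h
    rw [integral_undef h] at hℓ_prob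
    exact one_ne_zero hℓ_prob.symm
  set SA : ℝ := ∑ i, ∑ j, |A i j| with hSAdef
  have hSA0 : 0 ≤ SA :=
    Finset.sum_nonneg fun _ _ => Finset.sum_nonneg fun _ _ => abs_nonneg _
  set Y' : ℝ := Real.sqrt d * 𝒴 with hY'def
  have hY'0 : 0 ≤ Y' := mul_nonneg (Real.sqrt_nonneg _) h𝒴.le
  set K₁ : ℝ := 2 * (SA * Y') with hK₁def
  have hK₁0 : 0 ≤ K₁ := by positivity
  set Vk : ℝ := (volume K).toReal with hVkdef
  have hVk0 : 0 ≤ Vk := ENNReal.toReal_nonneg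
  set R : ℝ := x₀ + Y' with hRdef
  have hR0 : 0 ≤ R := by positivity
  -- symmetry of the bilinear form
  have hbil : ∀ v w : Fin d → ℝ, v ⬝ᵥ A.mulVec w = ∑ i, ∑ j, A i j * v i * w j := by
    intro v w
    simp only [dotProduct, Matrix.mulVec, Finset.mul_sum]
    exact Finset.sum_congr rfl fun i _ => Finset.sum_congr rfl fun j _ => by ring
  have hsym : ∀ v w : Fin d → ℝ, v ⬝ᵥ A.mulVec w = w ⬝ᵥ A.mulVec v := by
    intro v w
    rw [hbil, hbil, Finset.sum_comm]
    exact Finset.sum_congr rfl fun j _ => Finset.sum_congr rfl fun i _ => by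
      rw [hA_symm.apply i j]; ring
  have hexpand : ∀ y x : Fin d → ℝ, (y - x) ⬝ᵥ A.mulVec (y - x)
      = y ⬝ᵥ A.mulVec y - y ⬝ᵥ A.mulVec x - x ⬝ᵥ A.mulVec y + x ⬝ᵥ A.mulVec x := by
    intro y x
    simp only [Matrix.mulVec_sub, dotProduct_sub, sub_dotProduct]
    ring
  refine ⟨max (C * Vk * Real.exp (K₁ ^ 2 / (2 * lam) / ε)) (Real.exp (SA * R ^ 2 / (2 * ε))),
    fun x => ?_⟩
  set q : ℝ := x ⬝ᵥ A.mulVec x with hqdef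
  have hpx : pinf x ^ (-(1 / (2 * ε))) = Real.exp (q / (2 * ε)) := by
    rw [hpinf x, ← Real.exp_mul]
    congr 1
    field_simp
    exact hqdef.symm
  have hI0 : 0 ≤ ∫ y in K, ℓ (y - x) :=
    setIntegral_nonneg hKm fun y _ => hℓ_nonneg _
  have hIint : Integrable (fun y => ℓ (y - x)) := hℓ_int.comp_sub_right x
  have hyKnorm : ∀ y ∈ K, enorm5 y ≤ Y' := by
    intro y hy
    have hy' : ∀ i, |y i| ≤ 𝒴 := by
      intro i
      have := hy i (Set.mem_univ i)
      exact abs_le.mpr ⟨this.1, this.2⟩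
    have h1 : enorm5 y ≤ Real.sqrt (∑ _i : Fin d, 𝒴 ^ 2) := by
      apply Real.sqrt_le_sqrt
      refine Finset.sum_le_sum fun i _ => ?_
      have := hy' i
      nlinarith [abs_nonneg (y i), sq_abs (y i)]
    calc enorm5 y ≤ Real.sqrt (∑ _i : Fin d, 𝒴 ^ 2) := h1
      _ = Y' := by
        rw [Finset.sum_const, Finset.card_univ, Fintype.card_fin, nsmul_eq_mul,
          Real.sqrt_mul (Nat.cast_nonneg d), Real.sqrt_sq h𝒴.le, hY'def]
  rw [hpx]
  by_cases hcase : enorm5 x < R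
  · -- small ‖x‖ : integral ≤ 1, exponent bounded
    have hIle1 : ∫ y in K, ℓ (y - x) ≤ 1 := by
      calc ∫ y in K, ℓ (y - x) ≤ ∫ y, ℓ (y - x) :=
            setIntegral_le_integral hIint (Filter.Eventually.of_forall fun y => hℓ_nonneg _)
        _ = 1 := by rw [integral_sub_right_eq_self ℓ x]; exact hℓ_prob
    have hqle : q ≤ SA * R ^ 2 := by
      have h1 : q ≤ SA * (enorm5 x * enorm5 x) :=
        le_trans (le_abs_self q) (dot_bound5 A x x)
      have h2 : enorm5 x * enorm5 x ≤ R ^ 2 := by nlinarith [enorm5_nonneg x]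
      have h3 := mul_le_mul_of_nonneg_left h2 hSA0
      linarith
    calc Real.exp (q / (2 * ε)) * ∫ y in K, ℓ (y - x)
        ≤ Real.exp (q / (2 * ε)) * 1 :=
          mul_le_mul_of_nonneg_left hIle1 (Real.exp_nonneg _)
      _ = Real.exp (q / (2 * ε)) := mul_one _
      _ ≤ Real.exp (SA * R ^ 2 / (2 * ε)) := by
          apply Real.exp_le_exp.mpr
          exact (div_le_div_iff_of_pos_right (by positivity)).mpr hqle
      _ ≤ _ := le_max_right _ _
  · -- large ‖x‖
    push_neg at hcase
    have hpt : ∀ y ∈ K, ℓ (y - x) ≤ C * Real.exp ((-q + K₁ * enorm5 x) / ε) := by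
      intro y hy
      have hnorm : x₀ ≤ enorm5 (y - x) := by
        have h1 : enorm5 x ≤ enorm5 (x - y) + enorm5 y := by
          calc enorm5 x = enorm5 ((x - y) + y) := by rw [sub_add_cancel]
            _ ≤ enorm5 (x - y) + enorm5 y := enorm5_add_le _ _
        have h2 : enorm5 (x - y) = enorm5 (y - x) := by
          rw [← neg_sub, enorm5_neg]
        have h3 := hyKnorm y hy
        rw [h2] at h1
        linarith [hcase, hRdef]
      have hq2 : q - K₁ * enorm5 x ≤ (y - x) ⬝ᵥ A.mulVec (y - x) := by
        rw [hexpand y x]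
        have hqy : 0 ≤ y ⬝ᵥ A.mulVec y := by simpa using hA_pos.posSemidef.dotProduct_mulVec_nonneg y
        have hc1 : |y ⬝ᵥ A.mulVec x| ≤ SA * (Y' * enorm5 x) := by
          refine le_trans (dot_bound5 A y x) ?_
          gcongr
          · exact enorm5_nonneg _
          · exact hyKnorm y hy
        have hc2 : |x ⬝ᵥ A.mulVec y| ≤ SA * (Y' * enorm5 x) := by
          rw [hsym x y]; exact hc1
        have hc1' := abs_le.mp hc1
        have hc2' := abs_le.mp hc2
        have hKn : K₁ * enorm5 x = 2 * (SA * (Y' * enorm5 x)) := by rw [hK₁def]; ring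
        linarith [hc1'.1, hc1'.2, hc2'.1, hc2'.2, hqy, hKn, hqdef]
      calc ℓ (y - x) ≤ C * pinf (y - x) ^ ((1 : ℝ) / ε) := hdom (y - x) hnorm
        _ = C * Real.exp (-((y - x) ⬝ᵥ A.mulVec (y - x)) * (1 / ε)) := by
            rw [hpinf, ← Real.exp_mul]
        _ ≤ C * Real.exp ((-q + K₁ * enorm5 x) / ε) := by
            apply mul_le_mul_of_nonneg_left _ hC.le
            apply Real.exp_le_exp.mpr
            rw [div_eq_mul_one_div (-q + K₁ * enorm5 x) ε]
            apply mul_le_mul_of_nonneg_right _ (by positivity)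
            linarith
    have hInorm : ∫ y in K, ℓ (y - x) ≤ C * Real.exp ((-q + K₁ * enorm5 x) / ε) * Vk := by
      have hb := norm_setIntegral_le_of_norm_le_const (μ := volume) (s := K)
        (f := fun y => ℓ (y - x)) hKfin
        (fun y hy => by
          rw [Real.norm_eq_abs, abs_of_nonneg (hℓ_nonneg _)]
          exact hpt y hy)
      calc ∫ y in K, ℓ (y - x) ≤ ‖∫ y in K, ℓ (y - x)‖ := le_abs_self _
        _ ≤ C * Real.exp ((-q + K₁ * enorm5 x) / ε) * Vk := hb
    have hexple : q / (2 * ε) + (-q + K₁ * enorm5 x) / ε ≤ K₁ ^ 2 / (2 * lam) / ε := by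
      have heq : q / (2 * ε) + (-q + K₁ * enorm5 x) / ε = (-q / 2 + K₁ * enorm5 x) / ε := by
        field_simp
        ring
      rw [heq]
      have key : -q / 2 + K₁ * enorm5 x ≤ K₁ ^ 2 / (2 * lam) :=
        quad_bound5 lam K₁ (enorm5 x) q hlam (enorm5_nonneg x)
          (by rw [hqdef]; exact hcoer x)
      exact (div_le_div_iff_of_pos_right hε).mpr key
    calc Real.exp (q / (2 * ε)) * ∫ y in K, ℓ (y - x)
        ≤ Real.exp (q / (2 * ε)) * (C * Real.exp ((-q + K₁ * enorm5 x) / ε) * Vk) :=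
          mul_le_mul_of_nonneg_left hInorm (Real.exp_nonneg _)
      _ = C * Vk * Real.exp (q / (2 * ε) + (-q + K₁ * enorm5 x) / ε) := by
          rw [Real.exp_add]; ring
      _ ≤ C * Vk * Real.exp (K₁ ^ 2 / (2 * lam) / ε) := by
          apply mul_le_mul_of_nonneg_left (Real.exp_le_exp.mpr hexple) (by positivity)
      _ ≤ _ := le_max_left _ _
end
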